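/- arXiv:q-alg/9606019 — 2 statements merged into one kernel-verified Lean document; each statement's English description precedes it below -/
import Mathlib

section
/- Let V be a 3-dimensional vector space with basis {u, v, w} over a field containing an invertible element q, and define a bilinear bracket [·,·]_q by: [u,u]_q=0, [u,v]_q=−q²Mu, [u,w]_q=(q+q⁻¹)⁻¹Mv, [v,u]_q=Mu, [v,v]_q=(1−q²)Mv, [v,w]_q=−q²Mw, [w,u]_q=−(q+q⁻¹)⁻¹Mv, [w,v]_q=Mw, [w,w]_q=0, for a fixed nonzero scalar M. Then the left adjoint operators ad(x)z = [x,z]_q satisfy: q²·ad(u)ad(v) − ad(v)ad(u) = −h·ad(u), (q³+q)(ad(u)ad(w) − ad(w)ad(u)) + (1−q²)·ad(v)² = h·ad(v), and −q²·ad(v)ad(w) + ad(w)ad(v) = h·ad(w), where h = M(q⁴ − q² + 1). -/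
/-- The braided Jacobi identity for sl(2)_q: the left adjoint operators of the
braided bracket on the 3-dimensional q-adjoint module satisfy the same
quadratic-linear relations as the generators of the enveloping algebra,
with h = M(q⁴ − q² + 1). -/
theorem stmt_1 {K : Type*} [Field K] (q : K) (hq : q ≠ 0) (hq2 : q + q⁻¹ ≠ 0)
    (M : K) (hM : M ≠ 0)
    {V : Type*} [AddCommGroup V] [Module K V] (u v w : V)
    (hspan : Submodule.span K {u, v, w} = ⊤)
    (br : V →ₗ[K] V →ₗ[K] V)
    (h1 : br u u = 0) (h2 : br u v = (-(q ^ 2) * M) • u)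
    (h3 : br u w = ((q + q⁻¹)⁻¹ * M) • v)
    (h4 : br v u = M • u) (h5 : br v v = ((1 - q ^ 2) * M) • v)
    (h6 : br v w = (-(q ^ 2) * M) • w)
    (h7 : br w u = (-(q + q⁻¹)⁻¹ * M) • v) (h8 : br w v = M • w)
    (h9 : br w w = 0)
    (h : K) (hh : h = M * (q ^ 4 - q ^ 2 + 1)) :
    (∀ z : V, q ^ 2 • br u (br v z) - br v (br u z) = -h • br u z) ∧
    (∀ z : V, (q ^ 3 + q) • (br u (br w z) - br w (br u z)) +
        (1 - q ^ 2) • br v (br v z) = h • br v z) ∧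
    (∀ z : V, -q ^ 2 • br v (br w z) + br w (br v z) = h • br w z) := by
  have key : ∀ (f g : V →ₗ[K] V), f u = g u → f v = g v → f w = g w →
      ∀ z : V, f z = g z := by
    intro f g hu hv hw z
    have hfg : f = g := by
      apply LinearMap.ext_on hspan
      intro x hx
      simp only [Set.mem_insert_iff, Set.mem_singleton_iff] at hx
      rcases hx with rfl | rfl | rfl <;> assumption
    rw [hfg]
  have hq21 : 1 + q ^ 2 ≠ 0 := by
    have hqq : q * (q + q⁻¹) = 1 + q ^ 2 := by field_simp; ring
    exact hqq ▸ mul_ne_zero hq hq2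
  have hq21' : q ^ 2 + 1 ≠ 0 := by rw [add_comm]; exact hq21
  have hq21'' : q * q + 1 ≠ 0 := by rw [← sq]; exact hq21'
  subst hh
  refine ⟨?_, ?_, ?_⟩
  · intro z
    refine key (q ^ 2 • ((br u).comp (br v)) - (br v).comp (br u))
      ((-(M * (q ^ 4 - q ^ 2 + 1))) • br u) ?_ ?_ ?_ z
    · simp only [LinearMap.sub_apply, LinearMap.smul_apply, LinearMap.comp_apply,
        h1, h2, h3, h4, h5, h6, h7, h8, h9, map_smul, map_zero, smul_zero]
      match_scalars
      all_goals field_simp [hq, hq2, hq21, hq21', hq21'']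
      all_goals ring
    · simp only [LinearMap.sub_apply, LinearMap.smul_apply, LinearMap.comp_apply,
        h1, h2, h3, h4, h5, h6, h7, h8, h9, map_smul, map_zero, smul_zero]
      match_scalars
      all_goals field_simp [hq, hq2, hq21, hq21', hq21'']
      all_goals ring
    · simp only [LinearMap.sub_apply, LinearMap.smul_apply, LinearMap.comp_apply,
        h1, h2, h3, h4, h5, h6, h7, h8, h9, map_smul, map_zero, smul_zero]
      match_scalars
      all_goals field_simp [hq, hq2, hq21, hq21', hq21'']
      all_goals ring
  · intro z
    refine key ((q ^ 3 + q) • ((br u).comp (br w) - (br w).comp (br u)) +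
      (1 - q ^ 2) • ((br v).comp (br v)))
      ((M * (q ^ 4 - q ^ 2 + 1)) • br v) ?_ ?_ ?_ z
    · simp only [LinearMap.add_apply, LinearMap.sub_apply, LinearMap.smul_apply,
        LinearMap.comp_apply,
        h1, h2, h3, h4, h5, h6, h7, h8, h9, map_smul, map_zero, smul_zero]
      match_scalars
      all_goals field_simp [hq, hq2, hq21, hq21', hq21'']
      all_goals ring
    · simp only [LinearMap.add_apply, LinearMap.sub_apply, LinearMap.smul_apply,
        LinearMap.comp_apply,
        h1, h2, h3, h4, h5, h6, h7, h8, h9, map_smul, map_zero, smul_zero]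
      match_scalars
      all_goals field_simp [hq, hq2, hq21, hq21', hq21'']
      all_goals ring
    · simp only [LinearMap.add_apply, LinearMap.sub_apply, LinearMap.smul_apply,
        LinearMap.comp_apply,
        h1, h2, h3, h4, h5, h6, h7, h8, h9, map_smul, map_zero, smul_zero]
      match_scalars
      all_goals field_simp [hq, hq2, hq21, hq21', hq21'']
      all_goals ring
  · intro z
    refine key ((-q ^ 2) • ((br v).comp (br w)) + (br w).comp (br v))
      ((M * (q ^ 4 - q ^ 2 + 1)) • br w) ?_ ?_ ?_ z
    · simp only [LinearMap.add_apply, LinearMap.smul_apply, LinearMap.comp_apply,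
        h1, h2, h3, h4, h5, h6, h7, h8, h9, map_smul, map_zero, smul_zero]
      match_scalars
      all_goals field_simp [hq, hq2, hq21, hq21', hq21'']
      all_goals ring
    · simp only [LinearMap.add_apply, LinearMap.smul_apply, LinearMap.comp_apply,
        h1, h2, h3, h4, h5, h6, h7, h8, h9, map_smul, map_zero, smul_zero]
      match_scalars
      all_goals field_simp [hq, hq2, hq21, hq21', hq21'']
      all_goals ring
    · simp only [LinearMap.add_apply, LinearMap.smul_apply, LinearMap.comp_apply,
        h1, h2, h3, h4, h5, h6, h7, h8, h9, map_smul, map_zero, smul_zero]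
      match_scalars
      all_goals field_simp [hq, hq2, hq21, hq21', hq21'']
      all_goals ring
end

section
/- Let q be invertible with q+q⁻¹ ≠ 0, and consider the 2-dimensional space U with basis {a,b}. Define the map μ: V ⊗ U → U by μ(u⊗a)=0, μ(u⊗b)=a, μ(v⊗a)=q⁻¹a, μ(v⊗b)=−qb, μ(w⊗a)=q⁻¹b, μ(w⊗b)=0, where V = span{u,v,w} carries the U_q(sl(2))-action Hu=2u, Hv=0, Hw=−2w, Xu=0, Xv=−(q+q⁻¹)u, Xw=v, Yu=−v, Yv=(q+q⁻¹)w, Yw=0, and U carries Xa=0, Xb=a, Ha=a, Hb=−b, Ya=b, Yb=0, with V⊗U acted on via the coproduct Δ(X)=X⊗1+q^{−H}⊗X, Δ(Y)=1⊗Y+Y⊗q^{H}, Δ(H)=H⊗1+1⊗H. Then μ is equivariant for the generators: μ(X·(x⊗s)) = X·μ(x⊗s), μ(Y·(x⊗s)) = Y·μ(x⊗s), μ(H·(x⊗s)) = H·μ(x⊗s) for all x ∈ {u,v,w}, s ∈ {a,b}. -/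
open TensorProduct

set_option maxHeartbeats 3200000 in
/-- The explicit map μ : V ⊗ U → U (V the 3-dimensional q-adjoint module with
basis u,v,w; U the spin 1/2 module with basis a,b) given by μ(u⊗a)=0, μ(u⊗b)=a,
μ(v⊗a)=q⁻¹a, μ(v⊗b)=−qb, μ(w⊗a)=q⁻¹b, μ(w⊗b)=0 is a morphism of
U_q(sl(2))-modules, where V ⊗ U is acted on via the coproduct
Δ(X)=X⊗1+q^{−H}⊗X, Δ(Y)=1⊗Y+Y⊗q^{H}, Δ(H)=H⊗1+1⊗H. -/
theorem stmt_10 {K : Type*} [Field K] (q : K) (hq : q ≠ 0) (hq2 : q + q⁻¹ ≠ 0)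
    (XV YV HV KVinv : (Fin 3 → K) →ₗ[K] (Fin 3 → K))
    (hXV : XV = Matrix.toLin' !![0, -(q + q⁻¹), 0; 0, 0, 1; 0, 0, 0])
    (hYV : YV = Matrix.toLin' !![0, 0, 0; -1, 0, 0; 0, q + q⁻¹, 0])
    (hHV : HV = Matrix.toLin' !![2, 0, 0; 0, 0, 0; 0, 0, -2])
    (hKVinv : KVinv = Matrix.toLin' !![q⁻¹ ^ 2, 0, 0; 0, 1, 0; 0, 0, q ^ 2])
    (XU YU HU KU : (Fin 2 → K) →ₗ[K] (Fin 2 → K))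
    (hXU : XU = Matrix.toLin' !![0, 1; 0, 0])
    (hYU : YU = Matrix.toLin' !![0, 0; 1, 0])
    (hHU : HU = Matrix.toLin' !![1, 0; 0, -1])
    (hKU : KU = Matrix.toLin' !![q, 0; 0, q⁻¹])
    (μ : (Fin 3 → K) ⊗[K] (Fin 2 → K) →ₗ[K] (Fin 2 → K))
    (hμ : μ = ((Pi.basisFun K (Fin 3)).tensorProduct (Pi.basisFun K (Fin 2))).constr K
      (fun p : Fin 3 × Fin 2 =>
        (![![(0 : Fin 2 → K), ![1, 0]],
           ![q⁻¹ • ![1, 0], (-q) • ![0, 1]],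
           ![q⁻¹ • ![0, 1], (0 : Fin 2 → K)]] : Fin 3 → Fin 2 → Fin 2 → K) p.1 p.2)) :
    μ ∘ₗ (TensorProduct.map XV LinearMap.id + TensorProduct.map KVinv XU) = XU ∘ₗ μ ∧
    μ ∘ₗ (TensorProduct.map LinearMap.id YU + TensorProduct.map YV KU) = YU ∘ₗ μ ∧
    μ ∘ₗ (TensorProduct.map HV LinearMap.id + TensorProduct.map LinearMap.id HU) = HU ∘ₗ μ := by
  classical
  subst hXV hYV hHV hKVinv hXU hYU hHU hKU
  set bV := Pi.basisFun K (Fin 3) with hbV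
  set bU := Pi.basisFun K (Fin 2) with hbU
  set Mμ : Matrix (Fin 2) (Fin 3 × Fin 2) K :=
    Matrix.of fun i p =>
      (![![![0, 1], ![q⁻¹, 0], ![0, 0]],
         ![![0, 0], ![0, -q], ![q⁻¹, 0]]] : Fin 2 → Fin 3 → Fin 2 → K) i p.1 p.2 with hMμ
  have hμ' : LinearMap.toMatrix (bV.tensorProduct bU) bU μ = Mμ := by
    ext i ⟨j, k⟩
    rw [LinearMap.toMatrix_apply, hμ, Module.Basis.constr_basis]
    fin_cases i <;> fin_cases j <;> fin_cases k <;>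
      simp [hMμ, bU, Pi.basisFun_repr, Matrix.vecHead, Matrix.vecTail]
  have hinj := (LinearMap.toMatrix (bV.tensorProduct bU) bU).injective
  refine ⟨hinj ?_, hinj ?_, hinj ?_⟩ <;>
  · rw [LinearMap.toMatrix_comp _ (bV.tensorProduct bU) _,
      LinearMap.toMatrix_comp _ bU _, hμ', map_add,
      TensorProduct.toMatrix_map, TensorProduct.toMatrix_map]
    simp only [hbV, hbU, LinearMap.toMatrix_eq_toMatrix', LinearMap.toMatrix'_toLin',
      LinearMap.toMatrix_id, LinearMap.toMatrix'_id]
    ext i ⟨j, k⟩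
    simp only [Matrix.mul_apply, Matrix.add_apply, Matrix.kroneckerMap_apply,
      Fintype.sum_prod_type, Fin.sum_univ_succ, Fin.sum_univ_zero, Matrix.one_apply]
    fin_cases i <;> fin_cases j <;> fin_cases k <;>
      · simp [hMμ, Matrix.vecHead, Matrix.vecTail]
        try field_simp
        try ring
end
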